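/- For every n ≥ 3 and every 2-coloring (red/blue) of the edges of the complete graph K_n, there is a Hamiltonian cycle of K_n whose edge set is the union of the edge set of a red path and the edge set of a blue path (one of the paths possibly empty). -/

import Mathlib

/-- The list of edges of the cycle whose vertex sequence is `l`:
for `l = [v₁, …, vₙ]` these are `v₁v₂, …, vₙ₋₁vₙ, vₙv₁`. -/
def cycleEdges {V : Type*} (l : List V) : List (Sym2 V) :=
  (l.zip (l.rotate 1)).map fun p => s(p.1, p.2)

def pe {V : Type*} : List V → List (Sym2 V)
  | [] => []
  | [_] => []
  | a :: b :: t => s(a, b) :: pe (b :: t)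

variable {V : Type*}

lemma pe_glue (A : List V) (m : V) (B : List V) :
    pe (A ++ m :: B) = pe (A ++ [m]) ++ pe (m :: B) := by
  induction A with
  | nil => simp [pe]
  | cons a A ih =>
    cases A with
    | nil => cases B <;> simp [pe]
    | cons a' A' => simpa [pe] using ih

lemma zip_pe : ∀ (t : List V) (a x : V),
    ((a :: t).zip (t ++ [x])).map (fun p => s(p.1, p.2)) = pe (a :: (t ++ [x]))
  | [], a, x => by simp [pe]
  | b :: t', a, x => by simp [pe, zip_pe t' b x]

lemma ce_eq (a : V) (t : List V) : cycleEdges (a :: t) = pe (a :: (t ++ [a])) := by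
  rw [cycleEdges, show (1:ℕ) = 0 + 1 from rfl, List.rotate_cons_succ, List.rotate_zero]
  exact zip_pe t a a

lemma pe_subset_append : ∀ (l m : List V) (e : Sym2 V), e ∈ pe l → e ∈ pe (l ++ m)
  | [], _, _, h => by simp [pe] at h
  | [_], _, _, h => by simp [pe] at h
  | a :: b :: t, m, e, h => by
    rcases List.mem_cons.1 (by simpa [pe] using h) with h | h
    · simp [pe, h]
    · simpa [pe] using Or.inr (pe_subset_append (b :: t) m e h)

lemma pe_sub_cyc (a : V) (t : List V) (e : Sym2 V) (h : e ∈ pe (a :: t)) :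
    e ∈ cycleEdges (a :: t) := by
  rw [ce_eq]
  simpa using pe_subset_append (a :: t) [a] e h

lemma pe_snoc : ∀ (l : List V) (x : V) (e : Sym2 V), e ∈ pe (l ++ [x]) →
    e ∈ pe l ∨ ∃ v ∈ l, e = s(v, x)
  | [], x, e, h => by simp [pe] at h
  | [a], x, e, h => by
    right; exact ⟨a, by simp, by simpa [pe] using h⟩
  | a :: b :: t, x, e, h => by
    rcases List.mem_cons.1 (by simpa [pe] using h) with h | h
    · left; simp [pe, h]
    · rcases pe_snoc (b :: t) x e h with h | ⟨v, hv, hev⟩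
      · left; simpa [pe] using Or.inr h
      · right; exact ⟨v, by simp [List.mem_cons.1 hv], hev⟩

lemma pe_length : ∀ (a : V) (t : List V), (pe (a :: t)).length = t.length
  | _, [] => rfl
  | a, b :: t => by simp [pe, pe_length b t]

lemma cyc_append (a : V) (A' : List V) (b : V) (B' : List V) :
    cycleEdges ((a :: A') ++ (b :: B')) = pe ((a :: A') ++ [b]) ++ pe ((b :: B') ++ [a]) := by
  have h := pe_glue (a :: A') b (B' ++ [a])
  rw [show (a :: A') ++ (b :: B') = a :: (A' ++ b :: B') by simp, ce_eq]
  simpa using h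

lemma cyc_swap (A B : List V) (e : Sym2 V) :
    e ∈ cycleEdges (A ++ B) ↔ e ∈ cycleEdges (B ++ A) := by
  cases A with
  | nil => simp
  | cons a A' =>
    cases B with
    | nil => simp
    | cons b B' => rw [cyc_append, cyc_append]; simp [or_comm]

lemma rot_last {c : Sym2 V → Fin 2} {i : Fin 2} {l : List V}
    (hall : ∀ e ∈ cycleEdges l, c e = i) {v : V} (hv : v ∈ l) :
    ∃ D : List V, (D ++ [v]).Perm l ∧ ∀ e ∈ cycleEdges (D ++ [v]), c e = i := by
  obtain ⟨A, B, rfl⟩ := List.append_of_mem hv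
  refine ⟨B ++ A, ?_, fun e he => hall e ?_⟩
  · have p1 : ((B ++ A) ++ [v]).Perm ([v] ++ (B ++ A)) := List.perm_append_comm
    have p2 : ((v :: B) ++ A).Perm (A ++ (v :: B)) := List.perm_append_comm
    exact p1.trans (by simpa using p2)
  · have h1 : e ∈ cycleEdges ([v] ++ (B ++ A)) := (cyc_swap _ _ e).1 he
    have h2 : e ∈ cycleEdges ((v :: B) ++ A) := by simpa using h1
    simpa using (cyc_swap _ _ e).1 h2

lemma rot_head {c : Sym2 V → Fin 2} {i : Fin 2} {l : List V}
    (hall : ∀ e ∈ cycleEdges l, c e = i) {v : V} (hv : v ∈ l) :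
    ∃ D : List V, (v :: D).Perm l ∧ ∀ e ∈ cycleEdges (v :: D), c e = i := by
  obtain ⟨A, B, rfl⟩ := List.append_of_mem hv
  refine ⟨B ++ A, ?_, fun e he => hall e ?_⟩
  · have p2 : ((v :: B) ++ A).Perm (A ++ (v :: B)) := List.perm_append_comm
    simpa using p2
  · have h2 : e ∈ cycleEdges ((v :: B) ++ A) := by simpa using he
    simpa using (cyc_swap _ _ e).1 h2

lemma fin2 (x : Fin 2) : x = 0 ∨ x = 1 := by omega

lemma pe_cons (a : V) (m : List V) (e : Sym2 V) (h : e ∈ pe m) : e ∈ pe (a :: m) := by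
  cases m with
  | nil => simp [pe] at h
  | cons b t => simp [pe]; right; exact h

lemma red_split (a g : V) (r B : List V) :
    pe (a :: (r ++ g :: B)) = pe (a :: (r ++ [g])) ++ pe (g :: B) := by
  simpa using pe_glue (a :: r) g B

def AllC (c : Sym2 V → Fin 2) (i : Fin 2) (t : List V) : Prop :=
  ∃ l : List V, l ≠ [] ∧ l.Perm t ∧ ∀ e ∈ cycleEdges l, c e = i

def Mixed (c : Sym2 V → Fin 2) (t : List V) : Prop :=
  ∃ (a g : V) (r q : List V), (a :: (r ++ g :: q)).Perm t ∧
    (∀ e ∈ pe (a :: (r ++ [g])), c e = 0) ∧ (∀ e ∈ pe (g :: (q ++ [a])), c e = 1)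

lemma step (c : Sym2 V → Fin 2) (x : V) (t : List V)
    (h : AllC c 0 t ∨ AllC c 1 t ∨ Mixed c t) :
    AllC c 0 (x :: t) ∨ AllC c 1 (x :: t) ∨ Mixed c (x :: t) := by
  rcases h with ⟨l, hne, hperm, hall⟩ | ⟨l, hne, hperm, hall⟩ | ⟨a, g, r, q, hp, hr, hb⟩
  · -- all red
    by_cases hx : ∀ v ∈ l, c s(x, v) = 0
    · left
      refine ⟨x :: l, by simp, hperm.cons x, fun e he => ?_⟩
      obtain ⟨h0, l2, rfl⟩ : ∃ h0 l2, l = h0 :: l2 := by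
        cases l with | nil => exact absurd rfl hne | cons h0 l2 => exact ⟨h0, l2, rfl⟩
      rw [ce_eq] at he
      rcases (by simpa [pe] using he : e = s(x, h0) ∨ e ∈ pe ((h0 :: l2) ++ [x])) with rfl | he2
      · exact hx h0 (by simp)
      · rcases pe_snoc _ _ _ he2 with h3 | ⟨v, hv, rfl⟩
        · exact hall e (pe_sub_cyc _ _ _ h3)
        · rw [Sym2.eq_swap]; exact hx v hv
    · push_neg at hx
      obtain ⟨v, hv, hvne⟩ := hx
      have hv1 : c s(x, v) = 1 := (fin2 _).resolve_left hvne
      obtain ⟨D, pD, hD⟩ := rot_last hall hv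
      cases D with
      | nil =>
        right; left
        refine ⟨[v, x], by simp, ?_, fun e he => ?_⟩
        · have h1 : ([v, x] : List V).Perm [x, v] := List.Perm.swap x v []
          exact h1.trans (((by simpa using pD : ([v]:List V).Perm l).trans hperm).cons x)
        · rcases (by simpa [ce_eq, pe] using he : e = s(v, x) ∨ e = s(x, v)) with rfl | rfl
          · rw [Sym2.eq_swap]; exact hv1
          · exact hv1
      | cons w D' =>
        by_cases hxw : c s(x, w) = 0
        · right; right
          refine ⟨x, v, w :: D', [], ?_, fun e he => ?_, fun e he => ?_⟩
          · exact (pD.trans hperm).cons x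
          · rcases (by simpa [pe] using he : e = s(x, w) ∨ e ∈ pe ((w :: D') ++ [v]))
              with rfl | he2
            · exact hxw
            · exact hD e (pe_sub_cyc _ _ _ (by simpa using he2))
          · have : e = s(v, x) := by simpa [pe] using he
            rw [this, Sym2.eq_swap]; exact hv1
        · have hxw1 : c s(x, w) = 1 := (fin2 _).resolve_left hxw
          right; right
          refine ⟨w, v, D', [x], ?_, fun e he => ?_, fun e he => ?_⟩
          · have he1 : w :: (D' ++ v :: [x]) = ((w :: D') ++ [v]) ++ [x] := by simp
            rw [he1]
            exact (List.perm_append_singleton x _).trans ((pD.trans hperm).cons x)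
          · exact hD e (pe_sub_cyc _ _ _ (by simpa using he))
          · rcases (by simpa [pe] using he : e = s(v, x) ∨ e = s(x, w)) with rfl | rfl
            · rw [Sym2.eq_swap]; exact hv1
            · exact hxw1
  · -- all blue
    by_cases hx : ∀ v ∈ l, c s(x, v) = 1
    · right; left
      refine ⟨x :: l, by simp, hperm.cons x, fun e he => ?_⟩
      obtain ⟨h0, l2, rfl⟩ : ∃ h0 l2, l = h0 :: l2 := by
        cases l with | nil => exact absurd rfl hne | cons h0 l2 => exact ⟨h0, l2, rfl⟩
      rw [ce_eq] at he
      rcases (by simpa [pe] using he : e = s(x, h0) ∨ e ∈ pe ((h0 :: l2) ++ [x])) with rfl | he2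
      · exact hx h0 (by simp)
      · rcases pe_snoc _ _ _ he2 with h3 | ⟨v, hv, rfl⟩
        · exact hall e (pe_sub_cyc _ _ _ h3)
        · rw [Sym2.eq_swap]; exact hx v hv
    · push_neg at hx
      obtain ⟨v, hv, hvne⟩ := hx
      have hv0 : c s(x, v) = 0 := (fin2 _).resolve_right hvne
      obtain ⟨D, pD, hD⟩ := rot_head hall hv
      cases D with
      | nil =>
        left
        refine ⟨[v, x], by simp, ?_, fun e he => ?_⟩
        · have h1 : ([v, x] : List V).Perm [x, v] := List.Perm.swap x v []
          exact h1.trans (((by simpa using pD : ([v]:List V).Perm l).trans hperm).cons x)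
        · rcases (by simpa [ce_eq, pe] using he : e = s(v, x) ∨ e = s(x, v)) with rfl | rfl
          · rw [Sym2.eq_swap]; exact hv0
          · exact hv0
      | cons w D' =>
        have hblue : ∀ e ∈ pe ((w :: D') ++ [v]), c e = 1 := by
          intro e he
          refine hD e ?_
          rw [ce_eq]
          exact pe_cons v _ e (by simpa using he)
        by_cases hxw : c s(x, w) = 1
        · right; right
          refine ⟨v, x, [], w :: D', ?_, fun e he => ?_, fun e he => ?_⟩
          · have h1 : (v :: ([] ++ x :: (w :: D'))).Perm (x :: v :: (w :: D')) := by
              simpa using List.Perm.swap x v (w :: D')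
            exact h1.trans ((pD.trans hperm).cons x)
          · have : e = s(v, x) := by simpa [pe] using he
            rw [this, Sym2.eq_swap]; exact hv0
          · rcases (by simpa [pe] using he : e = s(x, w) ∨ e ∈ pe ((w :: D') ++ [v]))
              with rfl | he2
            · exact hxw
            · exact hblue e he2
        · have hxw0 : c s(x, w) = 0 := (fin2 _).resolve_right hxw
          right; right
          refine ⟨v, w, [x], D', ?_, fun e he => ?_, fun e he => ?_⟩
          · have h1 : (v :: ([x] ++ w :: D')).Perm (x :: v :: (w :: D')) := by
              simpa using List.Perm.swap x v (w :: D')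
            exact h1.trans ((pD.trans hperm).cons x)
          · rcases (by simpa [pe] using he : e = s(v, x) ∨ e = s(x, w)) with rfl | rfl
            · rw [Sym2.eq_swap]; exact hv0
            · exact hxw0
          · exact hblue e (by simpa using he)
  · -- mixed
    by_cases h0 : c s(x, g) = 0
    · cases q with
      | nil =>
        by_cases h1 : c s(x, a) = 0
        · left
          refine ⟨a :: (r ++ [g, x]), by simp, ?_, fun e he => ?_⟩
          · have he1 : a :: (r ++ [g, x]) = (a :: (r ++ [g])) ++ [x] := by simp
            rw [he1]
            have hp' : (a :: (r ++ [g])).Perm t := by simpa using hp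
            exact (List.perm_append_singleton x _).trans (hp'.cons x)
          · rw [ce_eq] at he
            have he2 : a :: ((r ++ [g, x]) ++ [a]) = a :: (r ++ g :: [x, a]) := by simp
            rw [he2, red_split] at he
            rcases List.mem_append.1 he with h2 | h2
            · exact hr e h2
            · rcases (by simpa [pe] using h2 : e = s(g, x) ∨ e = s(x, a)) with rfl | rfl
              · rw [Sym2.eq_swap]; exact h0
              · exact h1
        · have h1' : c s(x, a) = 1 := (fin2 _).resolve_left h1
          right; right
          refine ⟨a, x, r ++ [g], [], ?_, fun e he => ?_, fun e he => ?_⟩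
          · have he1 : a :: ((r ++ [g]) ++ x :: []) = (a :: (r ++ [g])) ++ [x] := by simp
            rw [he1]
            have hp' : (a :: (r ++ [g])).Perm t := by simpa using hp
            exact (List.perm_append_singleton x _).trans (hp'.cons x)
          · have he2 : a :: ((r ++ [g]) ++ [x]) = a :: (r ++ g :: [x]) := by simp
            rw [he2, red_split] at he
            rcases List.mem_append.1 he with h2 | h2
            · exact hr e h2
            · have : e = s(g, x) := by simpa [pe] using h2
              rw [this, Sym2.eq_swap]; exact h0
          · have : e = s(x, a) := by simpa [pe] using he
            rw [this]; exact h1'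
      | cons hh q' =>
        by_cases h1 : c s(x, hh) = 0
        · right; right
          refine ⟨a, hh, r ++ [g, x], q', ?_, fun e he => ?_, fun e he => ?_⟩
          · have he1 : a :: ((r ++ [g, x]) ++ hh :: q')
                = (a :: (r ++ [g])) ++ x :: (hh :: q') := by simp
            rw [he1]
            refine List.perm_middle.trans ?_
            refine List.Perm.cons x ?_
            have he2 : (a :: (r ++ [g])) ++ hh :: q' = a :: (r ++ g :: hh :: q') := by simp
            rw [he2]; exact hp
          · have he2 : a :: ((r ++ [g, x]) ++ [hh]) = a :: (r ++ g :: [x, hh]) := by simp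
            rw [he2, red_split] at he
            rcases List.mem_append.1 he with h2 | h2
            · exact hr e h2
            · rcases (by simpa [pe] using h2 : e = s(g, x) ∨ e = s(x, hh)) with rfl | rfl
              · rw [Sym2.eq_swap]; exact h0
              · exact h1
          · refine hb e ?_
            have he2 : g :: ((hh :: q') ++ [a]) = g :: hh :: (q' ++ [a]) := by simp
            rw [he2]
            exact pe_cons g _ e (by simpa using he)
        · have h1' : c s(x, hh) = 1 := (fin2 _).resolve_left h1
          right; right
          refine ⟨a, x, r ++ [g], hh :: q', ?_, fun e he => ?_, fun e he => ?_⟩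
          · have he1 : a :: ((r ++ [g]) ++ x :: (hh :: q'))
                = (a :: (r ++ [g])) ++ x :: (hh :: q') := by simp
            rw [he1]
            refine List.perm_middle.trans ?_
            refine List.Perm.cons x ?_
            have he2 : (a :: (r ++ [g])) ++ hh :: q' = a :: (r ++ g :: hh :: q') := by simp
            rw [he2]; exact hp
          · have he2 : a :: ((r ++ [g]) ++ [x]) = a :: (r ++ g :: [x]) := by simp
            rw [he2, red_split] at he
            rcases List.mem_append.1 he with h2 | h2
            · exact hr e h2
            · have : e = s(g, x) := by simpa [pe] using h2
              rw [this, Sym2.eq_swap]; exact h0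
          · have he2 : x :: ((hh :: q') ++ [a]) = x :: hh :: (q' ++ [a]) := by simp
            rw [he2] at he
            rcases (by simpa [pe] using he : e = s(x, hh) ∨ e ∈ pe (hh :: (q' ++ [a])))
              with rfl | he3
            · exact h1'
            · refine hb e ?_
              have he4 : g :: ((hh :: q') ++ [a]) = g :: hh :: (q' ++ [a]) := by simp
              rw [he4]
              exact pe_cons g _ e he3
    · have h0' : c s(x, g) = 1 := (fin2 _).resolve_left h0
      rcases List.eq_nil_or_concat r with rfl | ⟨r0, p, rfl⟩
      · by_cases h1 : c s(a, x) = 0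
        · right; right
          refine ⟨a, x, [], g :: q, ?_, fun e he => ?_, fun e he => ?_⟩
          · have h2 : (a :: ([] ++ x :: (g :: q))).Perm (x :: a :: (g :: q)) := by
              simpa using List.Perm.swap x a (g :: q)
            exact h2.trans (List.Perm.cons x (by simpa using hp))
          · have : e = s(a, x) := by simpa [pe] using he
            rw [this]; exact h1
          · rcases (by simpa [pe] using he : e = s(x, g) ∨ e ∈ pe (g :: (q ++ [a])))
              with rfl | he2
            · exact h0'
            · exact hb e he2
        · have h1' : c s(a, x) = 1 := (fin2 _).resolve_left h1
          right; left
          refine ⟨a :: x :: g :: q, by simp, ?_, fun e he => ?_⟩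
          · have h2 : (a :: x :: g :: q).Perm (x :: a :: (g :: q)) := List.Perm.swap x a _
            exact h2.trans (List.Perm.cons x (by simpa using hp))
          · rw [ce_eq] at he
            have he2 : a :: ((x :: g :: q) ++ [a]) = a :: x :: g :: (q ++ [a]) := by simp
            rw [he2] at he
            rcases (by simpa [pe] using he :
                e = s(a, x) ∨ e = s(x, g) ∨ e ∈ pe (g :: (q ++ [a]))) with rfl | rfl | he3
            · exact h1'
            · exact h0'
            · exact hb e he3
      · simp only [List.concat_eq_append] at hp hr
        have hred : ∀ e ∈ pe (a :: (r0 ++ [p])), c e = 0 := by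
          intro e he
          refine hr e ?_
          have he2 : a :: ((r0 ++ [p]) ++ [g]) = a :: (r0 ++ p :: [g]) := by simp
          rw [he2, red_split]
          exact List.mem_append.2 (Or.inl he)
        by_cases h1 : c s(p, x) = 0
        · right; right
          refine ⟨a, x, r0 ++ [p], g :: q, ?_, fun e he => ?_, fun e he => ?_⟩
          · have he1 : a :: ((r0 ++ [p]) ++ x :: (g :: q))
                = (a :: (r0 ++ [p])) ++ x :: (g :: q) := by simp
            rw [he1]
            refine List.perm_middle.trans (List.Perm.cons x ?_)
            have he2 : (a :: (r0 ++ [p])) ++ g :: q = a :: ((r0 ++ [p]) ++ g :: q) := by simp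
            rw [he2]; exact hp
          · have he2 : a :: ((r0 ++ [p]) ++ [x]) = a :: (r0 ++ p :: [x]) := by simp
            rw [he2, red_split] at he
            rcases List.mem_append.1 he with h2 | h2
            · exact hred e h2
            · have : e = s(p, x) := by simpa [pe] using h2
              rw [this]; exact h1
          · rcases (by simpa [pe] using he : e = s(x, g) ∨ e ∈ pe (g :: (q ++ [a])))
              with rfl | he2
            · exact h0'
            · exact hb e he2
        · have h1' : c s(p, x) = 1 := (fin2 _).resolve_left h1
          right; right
          refine ⟨a, p, r0, x :: g :: q, ?_, fun e he => ?_, fun e he => ?_⟩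
          · have he1 : a :: (r0 ++ p :: (x :: g :: q))
                = (a :: (r0 ++ [p])) ++ x :: (g :: q) := by simp
            rw [he1]
            refine List.perm_middle.trans (List.Perm.cons x ?_)
            have he2 : (a :: (r0 ++ [p])) ++ g :: q = a :: ((r0 ++ [p]) ++ g :: q) := by simp
            rw [he2]; exact hp
          · exact hred e he
          · have he2 : p :: ((x :: g :: q) ++ [a]) = p :: x :: g :: (q ++ [a]) := by simp
            rw [he2] at he
            rcases (by simpa [pe] using he :
                e = s(p, x) ∨ e = s(x, g) ∨ e ∈ pe (g :: (q ++ [a]))) with rfl | rfl | he3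
            · exact h1'
            · exact h0'
            · exact hb e he3

lemma main (c : Sym2 V → Fin 2) : ∀ t : List V, t ≠ [] →
    AllC c 0 t ∨ AllC c 1 t ∨ Mixed c t := by
  intro t
  induction t with
  | nil => intro h; exact absurd rfl h
  | cons x t ih =>
    intro _
    cases t with
    | nil =>
      rcases fin2 (c s(x, x)) with h | h
      · left
        refine ⟨[x], by simp, List.Perm.refl _, fun e he => ?_⟩
        have : e = s(x, x) := by simpa [ce_eq, pe] using he
        rw [this]; exact h
      · right; left
        refine ⟨[x], by simp, List.Perm.refl _, fun e he => ?_⟩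
        have : e = s(x, x) := by simpa [ce_eq, pe] using he
        rw [this]; exact h
    | cons y t' => exact step c x _ (ih (by simp))

/-- For `n ≥ 3`, every 2-colored `K_n` has a simple Hamiltonian cycle: a Hamiltonian
cycle whose edge set is the union of the edge set of a red path and the edge set of a
blue path (one of the paths possibly empty).  Equivalently, listing the cycle as
`v₁, …, vₙ` (all vertices distinct and every vertex occurring), there is a `k` such that
the first `k` cycle edges are red and the remaining cycle edges are blue. -/
theorem stmt_2 (n : ℕ) (hn : 3 ≤ n) (c : Sym2 (Fin n) → Fin 2) :
    ∃ (l : List (Fin n)) (k : ℕ),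
      l.Nodup ∧ (∀ v : Fin n, v ∈ l) ∧
      (∀ e ∈ (cycleEdges l).take k, c e = 0) ∧
      (∀ e ∈ (cycleEdges l).drop k, c e = 1) := by
  have hfr : (List.finRange n) ≠ [] := by
    intro h
    have := (List.length_finRange : (List.finRange n).length = n)
    rw [h] at this
    simp at this
    omega
  rcases main c (List.finRange n) hfr with
    ⟨l, hne, hperm, hall⟩ | ⟨l, hne, hperm, hall⟩ | ⟨a, g, r, q, hp, hr, hb⟩
  · exact ⟨l, (cycleEdges l).length, hperm.nodup_iff.2 (List.nodup_finRange n),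
      fun v => hperm.mem_iff.2 (List.mem_finRange v),
      fun e he => hall e (List.take_subset _ _ he),
      by simp⟩
  · exact ⟨l, 0, hperm.nodup_iff.2 (List.nodup_finRange n),
      fun v => hperm.mem_iff.2 (List.mem_finRange v),
      by simp,
      fun e he => hall e (by simpa using he)⟩
  · have hce : cycleEdges (a :: (r ++ g :: q))
        = pe (a :: (r ++ [g])) ++ pe (g :: (q ++ [a])) := by
      rw [ce_eq]
      have h2 : a :: ((r ++ g :: q) ++ [a]) = a :: (r ++ g :: (q ++ [a])) := by simp
      rw [h2, red_split]
    have hlen : (pe (a :: (r ++ [g]))).length = r.length + 1 := by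
      rw [pe_length]; simp
    refine ⟨a :: (r ++ g :: q), r.length + 1, hp.nodup_iff.2 (List.nodup_finRange n),
      fun v => hp.mem_iff.2 (List.mem_finRange v), fun e he => ?_, fun e he => ?_⟩
    · rw [hce, ← hlen, List.take_left] at he
      exact hr e he
    · rw [hce, ← hlen, List.drop_left] at he
      exact hb e he
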